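/- Let N = 2, let p = (p_1, p_2) be a prior with 1 > p_1 ≥ p_2 > 0 and p_1 + p_2 = 1, and let 0 ≤ ε ≤ −log p_2. Define the 2×2 mechanism P* as follows: if p_1 < e^{−ε}, let P* = [[e^ε p_2, 1 − e^ε p_2], [1 − e^ε p_1, e^ε p_1]]; if p_1 ≥ e^{−ε}, let P* = [[(e^ε − 1)/(e^ε p_1), (1 − e^ε p_2)/(e^ε p_1)], [0, 1]]. Then P* is a valid privacy mechanism satisfying ε-PML, and for every sublinear μ : [0,∞)^2 → [0,∞), P* maximizes the associated sub-convex utility U over M_2(ε), i.e., U(P*) ≥ U(Q) for every Q ∈ M_2(ε). -/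

import Mathlib

open scoped BigOperators Classical

noncomputable section

/-- The output distribution `P_Y(j) = ∑ i, p i * P i j` induced by a prior `p`
and a mechanism `P`. -/
def outDist {N M : ℕ} (p : Fin N → ℝ) (P : Matrix (Fin N) (Fin M) ℝ) (j : Fin M) : ℝ :=
  ∑ i, p i * P i j

/-- A privacy mechanism: nonnegative entries, rows summing to one. -/
def IsMechanism {N M : ℕ} (P : Matrix (Fin N) (Fin M) ℝ) : Prop :=
  (∀ i j, 0 ≤ P i j) ∧ ∀ i, ∑ j, P i j = 1

/-- Pointwise maximal leakage to output `j`: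
`ℓ(X → y_j) = log((max_i P i j) / P_Y(j))`. -/
def pml {N M : ℕ} (p : Fin N → ℝ) (P : Matrix (Fin N) (Fin M) ℝ) (j : Fin M) : ℝ :=
  Real.log ((⨆ i, P i j) / outDist p P j)

/-- `P` satisfies `ε`-PML (w.r.t. prior `p`): the leakage of every output of
positive probability is at most `ε`. -/
def SatisfiesPML {N M : ℕ} (p : Fin N → ℝ) (ε : ℝ) (P : Matrix (Fin N) (Fin M) ℝ) : Prop :=
  ∀ j, 0 < outDist p P j → pml p P j ≤ ε

/-- A sublinear function `μ : [0,∞)^N → [0,∞)`: nonnegative, positively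
homogeneous and subadditive on the nonnegative orthant. -/
def Sublinear {N : ℕ} (μ : (Fin N → ℝ) → ℝ) : Prop :=
  (∀ x, (∀ i, 0 ≤ x i) → 0 ≤ μ x) ∧
  (∀ (c : ℝ), 0 ≤ c → ∀ x, (∀ i, 0 ≤ x i) → μ (c • x) = c * μ x) ∧
  (∀ x y, (∀ i, 0 ≤ x i) → (∀ i, 0 ≤ y i) → μ (x + y) ≤ μ x + μ y)

/-- The sub-convex utility associated with `μ`: `U(P) = ∑ j, μ(P_j)` where
`P_j` is the `j`-th column of `P`. -/
def utility {N M : ℕ} (μ : (Fin N → ℝ) → ℝ) (P : Matrix (Fin N) (Fin M) ℝ) : ℝ :=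
  ∑ j, μ (fun i => P i j)

end

/-- The optimal binary mechanism of Theorem 2. -/
noncomputable def binMech (p1 p2 ε : ℝ) : Matrix (Fin 2) (Fin 2) ℝ :=
  if p1 < Real.exp (-ε) then
    !![Real.exp ε * p2, 1 - Real.exp ε * p2;
       1 - Real.exp ε * p1, Real.exp ε * p1]
  else
    !![(Real.exp ε - 1) / (Real.exp ε * p1), (1 - Real.exp ε * p2) / (Real.exp ε * p1);
       0, 1]

section Helpers

lemma sup_fin2 (f : Fin 2 → ℝ) : (⨆ i, f i) = max (f 0) (f 1) := by
  apply le_antisymm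
  · exact ciSup_le fun i => by fin_cases i <;> [exact le_max_left _ _; exact le_max_right _ _]
  · exact max_le (le_ciSup (Set.Finite.bddAbove (Set.finite_range f)) 0)
      (le_ciSup (Set.Finite.bddAbove (Set.finite_range f)) 1)

lemma col_bound {μ : (Fin 2 → ℝ) → ℝ} (hμ : Sublinear μ)
    (c d : Fin 2 → ℝ) (hc : ∀ i, 0 ≤ c i) (hd : ∀ i, 0 ≤ d i)
    (α β : ℝ) (hα : 0 ≤ α) (hβ : 0 ≤ β) :
    μ (α • c + β • d) ≤ α * μ c + β * μ d := by
  obtain ⟨-, hhom, hadd⟩ := hμ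
  have h1 : μ (α • c + β • d) ≤ μ (α • c) + μ (β • d) :=
    hadd _ _ (fun i => mul_nonneg hα (hc i)) (fun i => mul_nonneg hβ (hd i))
  rw [hhom α hα c hc, hhom β hβ d hd] at h1
  exact h1

lemma util_le {μ : (Fin 2 → ℝ) → ℝ} (hμ : Sublinear μ) (Q : Matrix (Fin 2) (Fin 2) ℝ)
    (c d : Fin 2 → ℝ) (hc : ∀ i, 0 ≤ c i) (hd : ∀ i, 0 ≤ d i)
    (α β : Fin 2 → ℝ) (hα : ∀ j, 0 ≤ α j) (hβ : ∀ j, 0 ≤ β j)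
    (hrep : ∀ j, (fun i => Q i j) = α j • c + β j • d)
    (hαs : α 0 + α 1 = 1) (hβs : β 0 + β 1 = 1) :
    utility μ Q ≤ μ c + μ d := by
  have h0 := col_bound hμ c d hc hd (α 0) (β 0) (hα 0) (hβ 0)
  have h1 := col_bound hμ c d hc hd (α 1) (β 1) (hα 1) (hβ 1)
  rw [← hrep 0] at h0
  rw [← hrep 1] at h1
  have hU : utility μ Q = μ (fun i => Q i 0) + μ (fun i => Q i 1) := by
    simp [utility, Fin.sum_univ_two]
  rw [hU]
  have ha1 : α 1 = 1 - α 0 := by linarith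
  have hb1 : β 1 = 1 - β 0 := by linarith
  rw [ha1, hb1] at h1
  nlinarith [h0, h1]

lemma pml_le_of {p : Fin 2 → ℝ} {P : Matrix (Fin 2) (Fin 2) ℝ} {ε : ℝ} {j : Fin 2}
    (hpos : 0 < outDist p P j)
    (hsup0 : 0 < max (P 0 j) (P 1 j))
    (hsup : max (P 0 j) (P 1 j) ≤ Real.exp ε * outDist p P j) :
    pml p P j ≤ ε := by
  unfold pml
  rw [sup_fin2 (fun i => P i j)]
  rw [Real.log_le_iff_le_exp (div_pos hsup0 hpos), div_le_iff₀ hpos]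
  exact hsup

end Helpers

set_option maxHeartbeats 2000000 in
/-- **Optimal binary mechanism.** For a binary prior
`1 > p1 ≥ p2 > 0` and `0 ≤ ε ≤ −log p2`, the mechanism `binMech p1 p2 ε` is a
valid mechanism satisfying `ε`-PML and maximizes every sub-convex utility over
`M_2(ε)`. -/
theorem binary_mech_optimal (p1 p2 : ℝ) (hp1lt : p1 < 1) (hord : p2 ≤ p1)
    (hp2 : 0 < p2) (hsum : p1 + p2 = 1)
    (ε : ℝ) (hε0 : 0 ≤ ε) (hεmax : ε ≤ -Real.log p2) :
    IsMechanism (binMech p1 p2 ε) ∧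
    SatisfiesPML ![p1, p2] ε (binMech p1 p2 ε) ∧
    ∀ μ : (Fin 2 → ℝ) → ℝ, Sublinear μ →
      ∀ Q : Matrix (Fin 2) (Fin 2) ℝ, IsMechanism Q → SatisfiesPML ![p1, p2] ε Q →
        utility μ Q ≤ utility μ (binMech p1 p2 ε) := by
  have hp2e : p2 = 1 - p1 := by linarith
  subst hp2e
  have hp1 : 0 < p1 := lt_of_lt_of_le hp2 hord
  set E := Real.exp ε with hEdef
  have hE0 : 0 < E := Real.exp_pos ε
  have hE1 : 1 ≤ E := by nlinarith [Real.add_one_le_exp ε]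
  have hEp2 : E * (1 - p1) ≤ 1 := by
    have h := Real.exp_le_exp.mpr hεmax
    rw [Real.exp_neg, Real.exp_log hp2] at h
    have h2 := mul_le_mul_of_nonneg_right h (le_of_lt hp2)
    rwa [inv_mul_cancel₀ (ne_of_gt hp2)] at h2
  -- leakage constraint extraction, valid for any Q satisfying ε-PML
  have hconstr : ∀ Q : Matrix (Fin 2) (Fin 2) ℝ, IsMechanism Q →
      SatisfiesPML ![p1, 1 - p1] ε Q → ∀ j,
      Q 0 j ≤ E * (p1 * Q 0 j + (1 - p1) * Q 1 j) ∧
      Q 1 j ≤ E * (p1 * Q 0 j + (1 - p1) * Q 1 j) := by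
    intro Q hQmech hQpml j
    have hQnn := hQmech.1
    have hD : outDist ![p1, 1 - p1] Q j = p1 * Q 0 j + (1 - p1) * Q 1 j := by
      simp [outDist, Fin.sum_univ_two]
    have hDnn : 0 ≤ p1 * Q 0 j + (1 - p1) * Q 1 j :=
      add_nonneg (mul_nonneg hp1.le (hQnn 0 j)) (mul_nonneg (by linarith) (hQnn 1 j))
    rcases eq_or_lt_of_le hDnn with h0 | hpos
    · have hq0 : Q 0 j = 0 := by nlinarith [hQnn 0 j, hQnn 1 j]
      have hq1 : Q 1 j = 0 := by nlinarith [hQnn 0 j, hQnn 1 j]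
      constructor <;> rw [hq0, hq1] <;> nlinarith
    · have hp := hQpml j (by rw [hD]; exact hpos)
      unfold pml at hp
      rw [sup_fin2 (fun i => Q i j)] at hp
      rw [hD] at hp
      have hsup0 : 0 < max (Q 0 j) (Q 1 j) := by
        rcases le_or_gt (Q 0 j) 0 with h | h
        · have h00 : Q 0 j = 0 := le_antisymm h (hQnn 0 j)
          have : 0 < Q 1 j := by nlinarith
          exact lt_max_iff.mpr (Or.inr this)
        · exact lt_max_iff.mpr (Or.inl h)
      have h2 := (Real.log_le_iff_le_exp (div_pos hsup0 hpos)).mp hp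
      rw [div_le_iff₀ hpos] at h2
      exact ⟨le_trans (le_max_left _ _) h2, le_trans (le_max_right _ _) h2⟩
  by_cases hbr : p1 < Real.exp (-ε)
  · -- case 1 : E * p1 < 1
    have hEp1 : E * p1 < 1 := by
      rw [Real.exp_neg] at hbr
      have := (mul_lt_mul_iff_right₀ hE0).mpr hbr
      rwa [mul_inv_cancel₀ (ne_of_gt hE0)] at this
    have hB : binMech p1 (1 - p1) ε =
        !![E * (1 - p1), 1 - E * (1 - p1); 1 - E * p1, E * p1] := by
      rw [hEdef, binMech, if_pos hbr]
    have hc0 : binMech p1 (1 - p1) ε 0 0 = E * (1 - p1) := by rw [hB]; simp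
    have hc1 : binMech p1 (1 - p1) ε 1 0 = 1 - E * p1 := by rw [hB]; simp
    have hd0 : binMech p1 (1 - p1) ε 0 1 = 1 - E * (1 - p1) := by rw [hB]; simp
    have hd1 : binMech p1 (1 - p1) ε 1 1 = E * p1 := by rw [hB]; simp
    have hmech : IsMechanism (binMech p1 (1 - p1) ε) := by
      refine ⟨fun i j => ?_, fun i => ?_⟩
      · fin_cases i <;> fin_cases j
        · show (0:ℝ) ≤ binMech p1 (1 - p1) ε 0 0; rw [hc0]; nlinarith
        · show (0:ℝ) ≤ binMech p1 (1 - p1) ε 0 1; rw [hd0]; nlinarith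
        · show (0:ℝ) ≤ binMech p1 (1 - p1) ε 1 0; rw [hc1]; nlinarith
        · show (0:ℝ) ≤ binMech p1 (1 - p1) ε 1 1; rw [hd1]; nlinarith
      · fin_cases i
        · show ∑ j, binMech p1 (1 - p1) ε 0 j = 1
          rw [Fin.sum_univ_two, hc0, hd0]; ring
        · show ∑ j, binMech p1 (1 - p1) ε 1 j = 1
          rw [Fin.sum_univ_two, hc1, hd1]; ring
    have hout0 : outDist ![p1, 1 - p1] (binMech p1 (1 - p1) ε) 0 = 1 - p1 := by
      show ∑ i, ![p1, 1 - p1] i * binMech p1 (1 - p1) ε i 0 = 1 - p1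
      rw [Fin.sum_univ_two, hc0, hc1]
      simp only [Matrix.cons_val_zero, Matrix.cons_val_one, Matrix.head_cons]
      ring
    have hout1 : outDist ![p1, 1 - p1] (binMech p1 (1 - p1) ε) 1 = p1 := by
      show ∑ i, ![p1, 1 - p1] i * binMech p1 (1 - p1) ε i 1 = p1
      rw [Fin.sum_univ_two, hd0, hd1]
      simp only [Matrix.cons_val_zero, Matrix.cons_val_one, Matrix.head_cons]
      ring
    have hpml0 : pml ![p1, 1 - p1] (binMech p1 (1 - p1) ε) 0 ≤ ε := by
      apply pml_le_of (by rw [hout0]; linarith)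
      · rw [hc0, hc1]
        exact lt_max_iff.mpr (Or.inl (by nlinarith))
      · rw [hc0, hc1, hout0, ← hEdef]
        exact max_le (le_refl _) (by nlinarith)
    have hpml1 : pml ![p1, 1 - p1] (binMech p1 (1 - p1) ε) 1 ≤ ε := by
      apply pml_le_of (by rw [hout1]; linarith)
      · rw [hd0, hd1]
        exact lt_max_iff.mpr (Or.inr (by nlinarith))
      · rw [hd0, hd1, hout1, ← hEdef]
        exact max_le (by nlinarith) (le_refl _)
    refine ⟨hmech, fun j _ => by fin_cases j; exacts [hpml0, hpml1], ?_⟩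
    intro μ hμ Q hQmech hQpml
    have hkey := hconstr Q hQmech hQpml
    have hQnn := hQmech.1
    have hra : Q 0 0 + Q 0 1 = 1 := by have := hQmech.2 0; rwa [Fin.sum_univ_two] at this
    have hrb : Q 1 0 + Q 1 1 = 1 := by have := hQmech.2 1; rwa [Fin.sum_univ_two] at this
    have hfinal : utility μ Q ≤
        μ (fun i => binMech p1 (1 - p1) ε i 0) + μ (fun i => binMech p1 (1 - p1) ε i 1) := by
      rcases eq_or_lt_of_le hE1 with hE1' | hE1'
      · -- E = 1 : every feasible column has equal entries
        have heq : ∀ j, Q 0 j = Q 1 j := by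
          intro j
          have h1 := (hkey j).1
          have h2 := (hkey j).2
          rw [← hE1'] at h1 h2
          apply le_antisymm <;> nlinarith
        apply util_le hμ Q _ _ (fun i => hmech.1 i 0) (fun i => hmech.1 i 1)
          (fun j => Q 0 j) (fun j => Q 1 j) (fun j => hQnn 0 j) (fun j => hQnn 1 j) ?_ hra hrb
        intro j
        funext i
        simp only [Pi.add_apply, Pi.smul_apply, smul_eq_mul]
        fin_cases i <;> simp only [Fin.zero_eta, Fin.mk_one]
        · rw [hc0, hd0, ← hE1']
          linear_combination p1 * heq j
        · rw [hc1, hd1, ← hE1']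
          linear_combination (p1 - 1) * heq j
      · -- 1 < E
        have hne : E - 1 ≠ 0 := ne_of_gt (by linarith)
        apply util_le hμ Q _ _ (fun i => hmech.1 i 0) (fun i => hmech.1 i 1)
          (fun j => (E * p1 * Q 0 j - (1 - E * (1 - p1)) * Q 1 j) / (E - 1))
          (fun j => (E * (1 - p1) * Q 1 j - (1 - E * p1) * Q 0 j) / (E - 1))
          (fun j => div_nonneg (by nlinarith [(hkey j).2]) (by linarith))
          (fun j => div_nonneg (by nlinarith [(hkey j).1]) (by linarith))
          ?_ ?_ ?_
        · intro j
          funext i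
          simp only [Pi.add_apply, Pi.smul_apply, smul_eq_mul]
          fin_cases i <;> simp only [Fin.zero_eta, Fin.mk_one]
          · rw [hc0, hd0]; field_simp; ring
          · rw [hc1, hd1]; field_simp; ring
        · show _ / (E - 1) + _ / (E - 1) = 1
          rw [← add_div, div_eq_one_iff_eq hne]
          linear_combination (E * p1) * hra - (1 - E * (1 - p1)) * hrb
        · show _ / (E - 1) + _ / (E - 1) = 1
          rw [← add_div, div_eq_one_iff_eq hne]
          linear_combination (E * (1 - p1)) * hrb - (1 - E * p1) * hra
    calc utility μ Q ≤ _ := hfinal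
      _ = utility μ (binMech p1 (1 - p1) ε) := by simp [utility, Fin.sum_univ_two]
  · -- case 2 : 1 ≤ E * p1
    have hble : Real.exp (-ε) ≤ p1 := not_lt.mp hbr
    have hEp1 : 1 ≤ E * p1 := by
      rw [Real.exp_neg] at hble
      have := mul_le_mul_of_nonneg_left hble hE0.le
      rwa [mul_inv_cancel₀ (ne_of_gt hE0)] at this
    have hE1' : 1 < E := by nlinarith
    have hne : E - 1 ≠ 0 := ne_of_gt (by linarith)
    have hEp1' : (0:ℝ) < E * p1 := by positivity
    have hB : binMech p1 (1 - p1) ε =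
        !![(E - 1) / (E * p1), (1 - E * (1 - p1)) / (E * p1); 0, 1] := by
      rw [hEdef, binMech, if_neg hbr]
    have hc0 : binMech p1 (1 - p1) ε 0 0 = (E - 1) / (E * p1) := by rw [hB]; simp
    have hc1 : binMech p1 (1 - p1) ε 1 0 = 0 := by rw [hB]; simp
    have hd0 : binMech p1 (1 - p1) ε 0 1 = (1 - E * (1 - p1)) / (E * p1) := by rw [hB]; simp
    have hd1 : binMech p1 (1 - p1) ε 1 1 = 1 := by rw [hB]; simp
    have hmech : IsMechanism (binMech p1 (1 - p1) ε) := by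
      refine ⟨fun i j => ?_, fun i => ?_⟩
      · fin_cases i <;> fin_cases j
        · show (0:ℝ) ≤ binMech p1 (1 - p1) ε 0 0
          rw [hc0]; exact div_nonneg (by linarith) hEp1'.le
        · show (0:ℝ) ≤ binMech p1 (1 - p1) ε 0 1
          rw [hd0]; exact div_nonneg (by linarith) hEp1'.le
        · show (0:ℝ) ≤ binMech p1 (1 - p1) ε 1 0; rw [hc1]
        · show (0:ℝ) ≤ binMech p1 (1 - p1) ε 1 1; rw [hd1]; norm_num
      · fin_cases i
        · show ∑ j, binMech p1 (1 - p1) ε 0 j = 1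
          rw [Fin.sum_univ_two, hc0, hd0, ← add_div, div_eq_one_iff_eq (ne_of_gt hEp1')]
          ring
        · show ∑ j, binMech p1 (1 - p1) ε 1 j = 1
          rw [Fin.sum_univ_two, hc1, hd1]; ring
    have hout0 : outDist ![p1, 1 - p1] (binMech p1 (1 - p1) ε) 0 = (E - 1) / E := by
      show ∑ i, ![p1, 1 - p1] i * binMech p1 (1 - p1) ε i 0 = (E - 1) / E
      rw [Fin.sum_univ_two, hc0, hc1]
      simp only [Matrix.cons_val_zero, Matrix.cons_val_one, Matrix.head_cons]
      field_simp
      ring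
    have hout1 : outDist ![p1, 1 - p1] (binMech p1 (1 - p1) ε) 1 = 1 / E := by
      show ∑ i, ![p1, 1 - p1] i * binMech p1 (1 - p1) ε i 1 = 1 / E
      rw [Fin.sum_univ_two, hd0, hd1]
      simp only [Matrix.cons_val_zero, Matrix.cons_val_one, Matrix.head_cons]
      field_simp
      ring
    have hpml0 : pml ![p1, 1 - p1] (binMech p1 (1 - p1) ε) 0 ≤ ε := by
      apply pml_le_of (by rw [hout0]; exact div_pos (by linarith) hE0)
      · rw [hc0, hc1]
        exact lt_max_iff.mpr (Or.inl (div_pos (by linarith) hEp1'))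
      · rw [hc0, hc1, hout0, ← hEdef]
        have hEE : E * ((E - 1) / E) = E - 1 := by field_simp
        rw [hEE]
        exact max_le (div_le_self (by linarith) hEp1) (by linarith)
    have hpml1 : pml ![p1, 1 - p1] (binMech p1 (1 - p1) ε) 1 ≤ ε := by
      apply pml_le_of (by rw [hout1]; positivity)
      · rw [hd0, hd1]
        exact lt_max_iff.mpr (Or.inr one_pos)
      · rw [hd0, hd1, hout1, ← hEdef]
        have hEE : E * (1 / E) = 1 := by field_simp
        rw [hEE]
        refine max_le ?_ (le_refl _)
        rw [div_le_one hEp1']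
        nlinarith
    refine ⟨hmech, fun j _ => by fin_cases j; exacts [hpml0, hpml1], ?_⟩
    intro μ hμ Q hQmech hQpml
    have hkey := hconstr Q hQmech hQpml
    have hQnn := hQmech.1
    have hra : Q 0 0 + Q 0 1 = 1 := by have := hQmech.2 0; rwa [Fin.sum_univ_two] at this
    have hrb : Q 1 0 + Q 1 1 = 1 := by have := hQmech.2 1; rwa [Fin.sum_univ_two] at this
    have hfinal : utility μ Q ≤
        μ (fun i => binMech p1 (1 - p1) ε i 0) + μ (fun i => binMech p1 (1 - p1) ε i 1) := by
      apply util_le hμ Q _ _ (fun i => hmech.1 i 0) (fun i => hmech.1 i 1)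
        (fun j => (E * p1 * Q 0 j - (1 - E * (1 - p1)) * Q 1 j) / (E - 1))
        (fun j => Q 1 j)
        (fun j => div_nonneg (by nlinarith [(hkey j).2]) (by linarith))
        (fun j => hQnn 1 j)
        ?_ ?_ hrb
      · intro j
        funext i
        simp only [Pi.add_apply, Pi.smul_apply, smul_eq_mul]
        fin_cases i <;> simp only [Fin.zero_eta, Fin.mk_one]
        · rw [hc0, hd0]
          field_simp
          ring
        · rw [hc1, hd1]; ring
      · show _ / (E - 1) + _ / (E - 1) = 1
        rw [← add_div, div_eq_one_iff_eq hne]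
        linear_combination (E * p1) * hra - (1 - E * (1 - p1)) * hrb
    calc utility μ Q ≤ _ := hfinal
      _ = utility μ (binMech p1 (1 - p1) ε) := by simp [utility, Fin.sum_univ_two]
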